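/- For every λ ∈ [−2, 2], the logarithmic potential of the Wigner semicircle law satisfies ∫_{−2}^{2} log|λ − s| · (1/(2π))√(4 − s²) ds = λ²/4 − 1/2. -/

import Mathlib

open Real Filter Set MeasureTheory intervalIntegral

open Topology

lemma il_log01 : IntervalIntegrable Real.log volume 0 1 := by
  have h : IntervalIntegrable (fun x : ℝ => -Real.log x) volume 0 1 := by
    refine intervalIntegrable_deriv_of_nonneg (g := fun x : ℝ => x - x * Real.log x)
      ((continuous_id.sub Real.continuous_mul_log).continuousOn) (fun x hx => ?_) (fun x hx => ?_)
    rotate_left 2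
    all_goals rw [show ((0:ℝ) ⊓ 1) = 0 by norm_num, show ((0:ℝ) ⊔ 1) = 1 by norm_num] at hx
    · have h1 : HasDerivAt (fun x : ℝ => x * Real.log x) (Real.log x + 1) x := by
        have h0 := (hasDerivAt_id' x).mul (Real.hasDerivAt_log hx.1.ne')
        refine h0.congr_deriv ?_
        rw [one_mul, mul_inv_cancel₀ hx.1.ne']
      have h2 := (hasDerivAt_id' x).sub h1
      refine h2.congr_deriv ?_; ring
    · simp only [neg_nonneg]
      exact Real.log_nonpos hx.1.le hx.2.le
  have hrw : Real.log = fun x => -(-Real.log x) := by funext x; simp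
  rw [hrw]; exact h.neg

lemma il_log02 : IntervalIntegrable Real.log volume 0 2 := by
  refine il_log01.trans (intervalIntegrable_log ?_)
  rw [Set.uIcc_of_le (by norm_num)]
  intro h
  simp only [Set.mem_Icc] at h
  linarith [h.1]

lemma il_logsin0 : IntervalIntegrable (fun x => Real.log |Real.sin x|) volume 0 (π/2) := by
  have hple : π/2 ≤ 2 := by nlinarith [Real.pi_le_four]
  have hb : IntervalIntegrable (fun x => Real.log (π/2) - Real.log x) volume 0 (π/2) := by
    refine IntervalIntegrable.sub intervalIntegrable_const (il_log02.mono_set ?_)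
    rw [Set.uIcc_of_le (by positivity), Set.uIcc_of_le (by norm_num)]
    exact Set.Icc_subset_Icc le_rfl hple
  rw [intervalIntegrable_iff_integrableOn_Ioc_of_le (by positivity)] at hb ⊢
  apply hb.mono' (Real.continuous_sin.abs.measurable.log.aestronglyMeasurable)
  rw [MeasureTheory.ae_restrict_iff' measurableSet_Ioc]
  filter_upwards with x hx
  have hxpos : 0 < x := hx.1
  have hxlt : x < π := lt_of_le_of_lt hx.2 (by linarith [Real.pi_pos])
  have hs : 0 < Real.sin x := Real.sin_pos_of_pos_of_lt_pi hxpos hxlt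
  rw [abs_of_pos hs]
  have h1 : Real.sin x ≤ 1 := Real.sin_le_one x
  have h2 : 2/π * x ≤ Real.sin x := Real.mul_le_sin hxpos.le hx.2
  have h3 : Real.log (2/π * x) ≤ Real.log (Real.sin x) :=
    Real.log_le_log (by positivity) h2
  have h4 : Real.log (2/π * x) = Real.log x - Real.log (π/2) := by
    rw [show 2/π * x = x / (π/2) by field_simp]
    exact Real.log_div hxpos.ne' (by positivity)
  have h5 : Real.log (Real.sin x) ≤ 0 := Real.log_nonpos hs.le h1
  rw [Real.norm_eq_abs, abs_of_nonpos h5]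
  linarith

lemma il_logsin_big : IntervalIntegrable (fun x => Real.log |Real.sin x|) volume (-(π/2)) π := by
  have piece0 : IntervalIntegrable (fun x => Real.log |Real.sin x|) volume (-(π/2)) 0 := by
    have h := ((IntervalIntegrable.iff_comp_neg (f := fun x => Real.log |Real.sin x|)).mp il_logsin0)
    have hfun : (fun x => Real.log |Real.sin (-x)|) = fun x => Real.log |Real.sin x| := by
      funext x; rw [Real.sin_neg, abs_neg]
    rw [hfun] at h
    simpa using h.symm
  have piece2 : IntervalIntegrable (fun x => Real.log |Real.sin x|) volume (π/2) π := by
    have h := il_logsin0.comp_sub_left π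
    have hfun : (fun x => Real.log |Real.sin (π - x)|) = fun x => Real.log |Real.sin x| := by
      funext x; rw [Real.sin_pi_sub]
    rw [hfun, show π - π/2 = π/2 by ring] at h
    simpa using h.symm
  exact (piece0.trans il_logsin0).trans piece2

lemma il_shift {c : ℝ} (hc : |c| ≤ π) :
    IntervalIntegrable (fun θ => Real.log |Real.sin ((θ + c)/2)|) volume 0 π := by
  have hpi := Real.pi_pos
  rw [abs_le] at hc
  have h1 := il_logsin_big.comp_add_right (c/2)
  have h2 := h1.comp_mul_left (c := (1/2 : ℝ))
  have hfun : (fun θ => Real.log |Real.sin ((θ + c)/2)|)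
      = fun x => Real.log |Real.sin (1/2 * x + c/2)| := by
    funext θ
    rw [show (θ + c)/2 = 1/2 * θ + c/2 by ring]
  rw [hfun]
  refine h2.mono_set ?_
  rw [Set.uIcc_of_le hpi.le, Set.uIcc_of_le (by rw [div_le_div_iff₀] <;> linarith)]
  refine Set.Icc_subset_Icc ?_ ?_
  · rw [div_le_iff₀ (by norm_num)]; linarith
  · rw [le_div_iff₀ (by norm_num)]; linarith

/-- `q r x = |1 - r e^{ix}|²` -/
noncomputable def q (r x : ℝ) : ℝ := 1 - 2*r*Real.cos x + r^2

lemma q_sin_half (r x : ℝ) : q r x = (1-r)^2 + 4*r*Real.sin (x/2)^2 := by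
  have h : Real.sin (x/2)^2 = 1/2 - Real.cos x / 2 := by
    have h1 := Real.sin_sq (x/2)
    have h2 := Real.cos_sq (x/2)
    rw [show 2*(x/2) = x by ring] at h2
    rw [h1, h2]; ring
  rw [q, h]; ring

lemma q_lower {r : ℝ} (x : ℝ) (hr : 1/2 ≤ r) (hr1 : r ≤ 1) :
    2 * Real.sin (x/2)^2 ≤ q r x := by
  rw [q_sin_half]
  nlinarith [sq_nonneg (1-r), sq_nonneg (Real.sin (x/2))]

lemma q_upper {r : ℝ} (x : ℝ) (hr : 0 ≤ r) (hr1 : r ≤ 1) : q r x ≤ 4 := by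
  rw [q]
  nlinarith [Real.neg_one_le_cos x]

lemma abs_log_le {a t : ℝ} (ha : 0 < a) (h1 : a ≤ t) (h2 : t ≤ 4) :
    |Real.log t| ≤ Real.log 4 + |Real.log a| := by
  have h0 : 0 < t := lt_of_lt_of_le ha h1
  have hl : Real.log t ≤ Real.log 4 := Real.log_le_log h0 h2
  have hg : Real.log a ≤ Real.log t := Real.log_le_log ha h1
  have h4 : (0:ℝ) ≤ Real.log 4 := Real.log_nonneg (by norm_num)
  rw [abs_le]
  constructor
  · have := neg_abs_le (Real.log a); linarith
  · have h5 := le_abs_self (Real.log a)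
    have h6 := abs_nonneg (Real.log a)
    linarith

/-- Taylor series of the log-modulus. -/
lemma hasSum_log_q {r : ℝ} (hr0 : 0 ≤ r) (hr1 : r < 1) (x : ℝ) :
    HasSum (fun n : ℕ => r^n * Real.cos (n*x) / n) (-(1/2) * Real.log (q r x)) := by
  set z : ℂ := (r:ℂ) * Complex.exp (x * Complex.I) with hz
  have hznorm : ‖z‖ < 1 := by
    rw [hz, norm_mul, Complex.norm_real, Complex.norm_exp_ofReal_mul_I,
      mul_one, Real.norm_eq_abs, abs_of_nonneg hr0]
    exact hr1
  have H := Complex.hasSum_taylorSeries_neg_log hznorm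
  have H2 := Complex.hasSum_re H
  have hre : (1 - z).re = 1 - r * Real.cos x := by
    simp [hz, Complex.exp_mul_I, Complex.cos_ofReal_re, Complex.sin_ofReal_re]
  have him : (1 - z).im = -(r * Real.sin x) := by
    simp [hz, Complex.exp_mul_I, Complex.cos_ofReal_re, Complex.sin_ofReal_re]
  have habs : Real.log ‖1 - z‖ = 1/2 * Real.log (q r x) := by
    rw [Complex.norm_def, Real.log_sqrt (Complex.normSq_nonneg _)]
    rw [Complex.normSq_apply, hre, him]
    rw [show (1 - r * Real.cos x) * (1 - r * Real.cos x) + -(r * Real.sin x) * -(r * Real.sin x)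
        = 1 - 2*r*Real.cos x + r^2 * (Real.sin x ^2 + Real.cos x^2) by ring,
      Real.sin_sq_add_cos_sq]
    rw [q]; ring
  have hterm : ∀ n : ℕ, ((z^n / n : ℂ)).re = r^n * Real.cos (n*x) / n := by
    intro n
    have hzn : z^n = ((r^n : ℝ) : ℂ) * Complex.exp ((n*x : ℝ) * Complex.I) := by
      rw [hz, mul_pow, ← Complex.exp_nat_mul]
      push_cast
      ring_nf
    rw [hzn]
    rw [show (((r ^ n : ℝ)) : ℂ) * Complex.exp ((((n:ℝ) * x : ℝ)) * Complex.I) / (n:ℂ)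
        = ((r^n / n : ℝ) : ℂ) * Complex.exp ((((n:ℝ) * x : ℝ)) * Complex.I) by push_cast; ring]
    rw [Complex.re_ofReal_mul, Complex.exp_ofReal_mul_I_re]
    ring
  have hfun : (fun n : ℕ => (z^n/ (n:ℂ)).re) = fun n : ℕ => r^n * Real.cos (n*x) / n :=
    funext hterm
  rw [hfun] at H2
  have hfin : (-Complex.log (1 - z)).re = -(1/2) * Real.log (q r x) := by
    rw [Complex.neg_re, Complex.log_re, habs]; ring
  rwa [hfin] at H2

lemma integral_cos_int {k : ℤ} (hk : k ≠ 0) : ∫ θ in (0:ℝ)..π, Real.cos (k*θ) = 0 := by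
  have hkr : ((k:ℝ)) ≠ 0 := Int.cast_ne_zero.mpr hk
  rw [intervalIntegral.integral_comp_mul_left (fun x => Real.cos x) hkr]
  rw [integral_cos]
  rw [mul_zero, Real.sin_zero, Real.sin_int_mul_pi]
  simp

lemma Cn_eq (n : ℕ) (hn : n ≠ 0) :
    ∫ θ in (0:ℝ)..π, Real.cos (n*θ) * Real.sin θ^2 = if n = 2 then -(π/4) else 0 := by
  have key : ∀ θ : ℝ, Real.cos (n*θ) * Real.sin θ^2
      = 1/2 * Real.cos (n*θ) - 1/4 * Real.cos (((n:ℝ)+2)*θ) - 1/4 * Real.cos (((n:ℝ)-2)*θ) := by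
    intro θ
    have h1 : Real.sin θ^2 = 1/2 - Real.cos (2*θ)/2 := by
      rw [Real.sin_sq, Real.cos_sq]; ring
    have h2 : Real.cos (((n:ℝ)+2)*θ) = Real.cos (n*θ) * Real.cos (2*θ)
        - Real.sin (n*θ) * Real.sin (2*θ) := by
      rw [show ((n:ℝ)+2)*θ = n*θ + 2*θ by ring, Real.cos_add]
    have h3 : Real.cos (((n:ℝ)-2)*θ) = Real.cos (n*θ) * Real.cos (2*θ)
        + Real.sin (n*θ) * Real.sin (2*θ) := by
      rw [show ((n:ℝ)-2)*θ = n*θ - 2*θ by ring, Real.cos_sub]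
    rw [h1, h2, h3]; ring
  rw [intervalIntegral.integral_congr (fun θ _ => key θ)]
  have i1 : IntervalIntegrable (fun θ : ℝ => 1/2 * Real.cos (n*θ)) volume 0 π :=
    (Continuous.intervalIntegrable (by continuity) _ _)
  have i2 : IntervalIntegrable (fun θ : ℝ => 1/4 * Real.cos (((n:ℝ)+2)*θ)) volume 0 π :=
    (Continuous.intervalIntegrable (by continuity) _ _)
  have i3 : IntervalIntegrable (fun θ : ℝ => 1/4 * Real.cos (((n:ℝ)-2)*θ)) volume 0 π :=
    (Continuous.intervalIntegrable (by continuity) _ _)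
  rw [intervalIntegral.integral_sub (i1.sub i2) i3, intervalIntegral.integral_sub i1 i2,
    intervalIntegral.integral_const_mul, intervalIntegral.integral_const_mul,
    intervalIntegral.integral_const_mul]
  have e1 : ∫ θ in (0:ℝ)..π, Real.cos (n*θ) = 0 := by
    have := integral_cos_int (k := (n:ℤ)) (by exact_mod_cast hn)
    simpa using this
  have e2 : ∫ θ in (0:ℝ)..π, Real.cos (((n:ℝ)+2)*θ) = 0 := by
    have := integral_cos_int (k := (n:ℤ)+2) (by positivity)
    rw [show (((n:ℤ)+2 : ℤ) : ℝ) = ((n:ℝ)+2) by push_cast; ring] at this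
    exact this
  by_cases h2 : n = 2
  · subst h2
    rw [e1, e2]
    norm_num
    ring
  · have e3 : ∫ θ in (0:ℝ)..π, Real.cos (((n:ℝ)-2)*θ) = 0 := by
      have hne : ((n:ℤ) - 2) ≠ 0 := by
        intro h
        apply h2
        omega
      have := integral_cos_int (k := (n:ℤ)-2) hne
      rw [show (((n:ℤ)-2 : ℤ) : ℝ) = ((n:ℝ)-2) by push_cast; ring] at this
      exact this
    rw [e1, e2, e3, if_neg h2]
    ring



lemma claim1 (φ : ℝ) {r : ℝ} (hr0 : 0 ≤ r) (hr1 : r < 1) :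
    ∫ θ in Ioo (0:ℝ) π,
      (1/2 * Real.log (q r (θ-φ)) + 1/2 * Real.log (q r (θ+φ))) * Real.sin θ^2
      = π/4 * r^2 * Real.cos (2*φ) := by
  set F : ℕ → ℝ → ℝ := fun n θ =>
    (-(2 * r^n * Real.cos (n*φ) / n)) * (Real.cos (n*θ) * Real.sin θ^2) with hF
  -- pointwise HasSum
  have hsum : ∀ θ : ℝ, HasSum (fun n => F n θ)
      ((1/2 * Real.log (q r (θ-φ)) + 1/2 * Real.log (q r (θ+φ))) * Real.sin θ^2) := by
    intro θ
    have h1 := hasSum_log_q hr0 hr1 (θ-φ)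
    have h2 := hasSum_log_q hr0 hr1 (θ+φ)
    have h3 := ((h1.add h2).mul_right (Real.sin θ^2)).neg
    have hseq : (fun n : ℕ => -((r^n * Real.cos (n*(θ-φ)) / n + r^n * Real.cos (n*(θ+φ)) / n)
        * Real.sin θ^2)) = fun n => F n θ := by
      funext n
      have : Real.cos ((n:ℝ)*(θ-φ)) + Real.cos ((n:ℝ)*(θ+φ))
          = 2 * Real.cos (n*θ) * Real.cos (n*φ) := by
        rw [mul_sub, mul_add, Real.cos_sub, Real.cos_add]; ring
      simp only [hF]
      rw [← add_div, show r^n * Real.cos ((n:ℝ)*(θ-φ)) + r^n * Real.cos ((n:ℝ)*(θ+φ))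
          = r^n * (Real.cos ((n:ℝ)*(θ-φ)) + Real.cos ((n:ℝ)*(θ+φ))) from by ring, this]
      ring
    rw [hseq] at h3
    have e : (1/2 * Real.log (q r (θ-φ)) + 1/2 * Real.log (q r (θ+φ))) * Real.sin θ^2
        = -((-(1/2) * Real.log (q r (θ-φ)) + -(1/2) * Real.log (q r (θ+φ))) * Real.sin θ^2) := by
      ring
    rw [e]; exact h3
  -- integrability of each term
  have hFint : ∀ n : ℕ, IntegrableOn (F n) (Ioo (0:ℝ) π) volume := by
    intro n
    have hcont : Continuous (F n) := by
      apply Continuous.mul continuous_const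
      exact (Real.continuous_cos.comp (continuous_const.mul continuous_id)).mul
        ((Real.continuous_sin).pow 2)
    exact (hcont.integrableOn_Icc).mono_set Ioo_subset_Icc_self
  -- uniform bound
  have hbd : ∀ n : ℕ, ∀ θ : ℝ, ‖F n θ‖ ≤ 2 * r^n := by
    intro n θ
    rw [Real.norm_eq_abs, hF, abs_mul, abs_neg]
    have h1 : |2 * r^n * Real.cos (n*φ) / n| ≤ 2 * r^n := by
      rcases Nat.eq_zero_or_pos n with h | h
      · subst h; simp
      · rw [abs_div, abs_mul, abs_mul]
        rw [abs_of_nonneg (by norm_num : (0:ℝ) ≤ 2), abs_of_nonneg (pow_nonneg hr0 n),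
          abs_of_nonneg (show (0:ℝ) ≤ (n:ℝ) from Nat.cast_nonneg n)]
        calc 2 * r^n * |Real.cos (n*φ)| / n ≤ 2 * r^n * 1 / n := by
              gcongr; exact Real.abs_cos_le_one _
          _ ≤ 2 * r^n := by
              rw [mul_one]
              exact div_le_self (by positivity) (by exact_mod_cast h)
    have h2 : |Real.cos ((n:ℝ)*θ) * Real.sin θ^2| ≤ 1 := by
      rw [abs_mul]
      have := Real.abs_cos_le_one ((n:ℝ)*θ)
      have h3 : |Real.sin θ^2| ≤ 1 := by
        rw [abs_of_nonneg (sq_nonneg _)]; exact Real.sin_sq_le_one θ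
      nlinarith [abs_nonneg (Real.cos ((n:ℝ)*θ)), abs_nonneg (Real.sin θ^2)]
    nlinarith [abs_nonneg (2 * r^n * Real.cos (n*φ) / n), abs_nonneg (Real.cos ((n:ℝ)*θ) * Real.sin θ^2)]
  -- summability of integrals of norms
  have hsummable : Summable (fun n => ∫ θ in Ioo (0:ℝ) π, ‖F n θ‖) := by
    refine Summable.of_nonneg_of_le (f := fun n => (2 * r^n) * π)
      (fun n => integral_nonneg (fun θ => norm_nonneg _)) (fun n => ?_)
      (((summable_geometric_of_lt_one hr0 hr1).mul_left 2).mul_right π)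
    · have : ∫ θ in Ioo (0:ℝ) π, ‖F n θ‖ ≤ ∫ _θ in Ioo (0:ℝ) π, 2 * r^n := by
        apply setIntegral_mono_on (hFint n).norm ((integrableOn_const_iff (C := 2 * r^n)).mpr ?_)
          measurableSet_Ioo (fun θ _ => hbd n θ)
        right
        rw [Real.volume_Ioo]
        exact ENNReal.ofReal_lt_top
      rw [setIntegral_const, Real.volume_real_Ioo, sub_zero,
        max_eq_left Real.pi_pos.le, smul_eq_mul, mul_comm] at this
      exact this
  -- interchange
  have hkey := MeasureTheory.hasSum_integral_of_summable_integral_norm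
    (μ := volume.restrict (Ioo (0:ℝ) π)) (F := F)
    (fun n => hFint n) hsummable
  have htsum : ∀ θ : ℝ, (∑' n, F n θ)
      = (1/2 * Real.log (q r (θ-φ)) + 1/2 * Real.log (q r (θ+φ))) * Real.sin θ^2 :=
    fun θ => (hsum θ).tsum_eq
  rw [show (fun θ => ∑' n, F n θ) = fun θ =>
      (1/2 * Real.log (q r (θ-φ)) + 1/2 * Real.log (q r (θ+φ))) * Real.sin θ^2
      from funext htsum] at hkey
  -- values of termwise integrals
  have hIoo_eq : ∀ n : ℕ, n ≠ 0 → ∫ θ in Ioo (0:ℝ) π, Real.cos (n*θ) * Real.sin θ^2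
      = if n = 2 then -(π/4) else 0 := by
    intro n hn
    rw [← MeasureTheory.integral_Ioc_eq_integral_Ioo,
      ← intervalIntegral.integral_of_le Real.pi_pos.le]
    exact Cn_eq n hn
  have hval : ∀ n : ℕ, ∫ θ in Ioo (0:ℝ) π, F n θ
      = if n = 2 then π/4 * r^2 * Real.cos (2*φ) else 0 := by
    intro n
    rw [hF]
    rw [MeasureTheory.integral_const_mul]
    rcases Nat.eq_zero_or_pos n with h | h
    · subst h; simp
    · rw [hIoo_eq n h.ne']
      by_cases h2 : n = 2
      · subst h2
        rw [if_pos rfl, if_pos rfl]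
        push_cast
        ring
      · rw [if_neg h2, if_neg h2, mul_zero]
  -- conclude
  have hsingle : HasSum (fun n => ∫ θ in Ioo (0:ℝ) π, F n θ) (π/4 * r^2 * Real.cos (2*φ)) := by
    have h := hasSum_single (f := fun n => ∫ θ in Ioo (0:ℝ) π, F n θ) 2
      (fun b hb => by simp only [hval b, if_neg hb])
    simpa [hval 2] using h
  exact hkey.unique hsingle


lemma ae_ne (φ : ℝ) : ∀ᵐ θ ∂(volume.restrict (Ioo (0:ℝ) π)),
    Real.sin ((θ-φ)/2) ≠ 0 ∧ Real.sin ((θ+φ)/2) ≠ 0 := by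
  have hB : volume ({θ : ℝ | Real.sin ((θ-φ)/2) = 0} ∪ {θ : ℝ | Real.sin ((θ+φ)/2) = 0}) = 0 := by
    apply Set.Countable.measure_zero
    apply Set.Countable.union
    · apply Set.Countable.mono ?_ (Set.countable_range (fun k : ℤ => 2*(k:ℝ)*π + φ))
      intro θ hθ
      rw [Set.mem_setOf_eq, Real.sin_eq_zero_iff] at hθ
      obtain ⟨k, hk⟩ := hθ
      exact ⟨k, by show 2*(k:ℝ)*π + φ = θ; linarith⟩
    · apply Set.Countable.mono ?_ (Set.countable_range (fun k : ℤ => 2*(k:ℝ)*π - φ))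
      intro θ hθ
      rw [Set.mem_setOf_eq, Real.sin_eq_zero_iff] at hθ
      obtain ⟨k, hk⟩ := hθ
      exact ⟨k, by show 2*(k:ℝ)*π - φ = θ; linarith⟩
  have hae := (measure_eq_zero_iff_ae_notMem).mp hB
  apply ae_restrict_of_ae
  filter_upwards [hae] with θ hθ
  rw [Set.mem_union, Set.mem_setOf_eq, Set.mem_setOf_eq] at hθ
  push_neg at hθ
  exact hθ

lemma X_eq (l : ℝ) (hl : l ∈ Set.Icc (-2:ℝ) 2) :
    ∫ θ in Ioo (0:ℝ) π, Real.log |l - 2*Real.cos θ| * Real.sin θ^2 = π/4 * (l^2/2 - 1) := by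
  obtain ⟨hl1, hl2⟩ := hl
  set φ := Real.arccos (l/2) with hφ
  have hcos : Real.cos φ = l/2 := Real.cos_arccos (by linarith) (by linarith)
  have hφ0 : 0 ≤ φ := Real.arccos_nonneg _
  have hφπ : φ ≤ π := Real.arccos_le_pi _
  have hφle : |φ| ≤ π := by rw [abs_of_nonneg hφ0]; exact hφπ
  have hφle' : |(-φ)| ≤ π := by rw [abs_neg]; exact hφle
  set r : ℕ → ℝ := fun n => 1 - 1/((n:ℝ)+2) with hr
  have hrhalf : ∀ n, (1:ℝ)/2 ≤ r n := by
    intro n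
    have h1 : 1/((n:ℝ)+2) ≤ 1/2 := by
      apply one_div_le_one_div_of_le (by norm_num)
      linarith [Nat.cast_nonneg (α := ℝ) n]
    simp only [hr]; linarith
  have hr0 : ∀ n, (0:ℝ) ≤ r n := fun n => le_trans (by norm_num) (hrhalf n)
  have hrlt : ∀ n, r n < 1 := by
    intro n
    have : 0 < 1/((n:ℝ)+2) := by positivity
    simp only [hr]; linarith
  have hrto : Tendsto r atTop (𝓝 1) := by
    have h2 : Tendsto (fun n : ℕ => ((n:ℝ)+2)) atTop atTop :=
      tendsto_atTop_add_const_right _ 2 tendsto_natCast_atTop_atTop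
    have h3 := h2.inv_tendsto_atTop
    have h4 : Tendsto (fun n : ℕ => 1 - 1/((n:ℝ)+2)) atTop (𝓝 (1 - 0)) :=
      tendsto_const_nhds.sub (by simpa [one_div, Pi.inv_def] using h3)
    simpa [hr, one_div] using h4
  set G : ℝ → ℝ := fun θ =>
    3 + |Real.log (Real.sin ((θ-φ)/2))| + |Real.log (Real.sin ((θ+φ)/2))| with hG
  set Fn : ℕ → ℝ → ℝ := fun n θ =>
    (1/2 * Real.log (q (r n) (θ-φ)) + 1/2 * Real.log (q (r n) (θ+φ))) * Real.sin θ^2 with hFn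
  have hmeas : ∀ n, AEStronglyMeasurable (Fn n) (volume.restrict (Ioo (0:ℝ) π)) := by
    intro n
    apply Measurable.aestronglyMeasurable
    apply Measurable.mul ?_ (Real.continuous_sin.measurable.pow_const 2)
    apply Measurable.add <;>
    · apply Measurable.const_mul
      apply Real.measurable_log.comp
      unfold q
      fun_prop
  have hGint : Integrable G (volume.restrict (Ioo (0:ℝ) π)) := by
    have h1 := (il_shift (c := -φ) hφle').abs
    have h2 := (il_shift (c := φ) hφle).abs
    simp only [Real.log_abs] at h1 h2
    rw [intervalIntegrable_iff_integrableOn_Ioo_of_le Real.pi_pos.le] at h1 h2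
    have hGeq : G = fun θ =>
        (3 : ℝ) + |Real.log (Real.sin ((θ + -φ)/2))| + |Real.log (Real.sin ((θ+φ)/2))| := by
      funext θ; rw [hG]; norm_num [sub_eq_add_neg]
    rw [hGeq]
    refine Integrable.add (Integrable.add ?_ h1) h2
    exact (integrableOn_const_iff (C := (3:ℝ))).mpr (Or.inr (by rw [Real.volume_Ioo]; exact ENNReal.ofReal_lt_top))
  have hEae := ae_ne φ
  have hlog2 : Real.log 4 + Real.log 2 ≤ 3 := by
    have h4 : Real.log 4 = 2 * Real.log 2 := by
      rw [show (4:ℝ) = 2^2 by norm_num, Real.log_pow]; norm_num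
    have := Real.log_two_lt_d9
    rw [h4]; linarith
  have hbound : ∀ n, ∀ᵐ θ ∂(volume.restrict (Ioo (0:ℝ) π)), ‖Fn n θ‖ ≤ G θ := by
    intro n
    filter_upwards [hEae] with θ hθ
    obtain ⟨hs1, hs2⟩ := hθ
    have hpos1 : 0 < 2 * Real.sin ((θ-φ)/2)^2 := by positivity
    have hpos2 : 0 < 2 * Real.sin ((θ+φ)/2)^2 := by positivity
    have ha1 := abs_log_le hpos1 (q_lower (θ-φ) (hrhalf n) (hrlt n).le)
      (q_upper (θ-φ) (hr0 n) (hrlt n).le)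
    have ha2 := abs_log_le hpos2 (q_lower (θ+φ) (hrhalf n) (hrlt n).le)
      (q_upper (θ+φ) (hr0 n) (hrlt n).le)
    have hb1 : |Real.log (2*Real.sin ((θ-φ)/2)^2)|
        ≤ Real.log 2 + 2*|Real.log (Real.sin ((θ-φ)/2))| := by
      rw [Real.log_mul two_ne_zero (by positivity), Real.log_pow]
      push_cast
      have e1 := abs_add_le (Real.log 2) (2 * Real.log (Real.sin ((θ-φ)/2)))
      have e2 : |Real.log 2| = Real.log 2 := abs_of_nonneg (Real.log_nonneg (by norm_num))
      have e3 : |2 * Real.log (Real.sin ((θ-φ)/2))| = 2 * |Real.log (Real.sin ((θ-φ)/2))| := by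
        rw [abs_mul, abs_of_nonneg (by norm_num : (0:ℝ) ≤ 2)]
      linarith
    have hb2 : |Real.log (2*Real.sin ((θ+φ)/2)^2)|
        ≤ Real.log 2 + 2*|Real.log (Real.sin ((θ+φ)/2))| := by
      rw [Real.log_mul two_ne_zero (by positivity), Real.log_pow]
      push_cast
      have e1 := abs_add_le (Real.log 2) (2 * Real.log (Real.sin ((θ+φ)/2)))
      have e2 : |Real.log 2| = Real.log 2 := abs_of_nonneg (Real.log_nonneg (by norm_num))
      have e3 : |2 * Real.log (Real.sin ((θ+φ)/2))| = 2 * |Real.log (Real.sin ((θ+φ)/2))| := by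
        rw [abs_mul, abs_of_nonneg (by norm_num : (0:ℝ) ≤ 2)]
      linarith
    have hnorm : ‖Fn n θ‖ ≤ 1/2 * |Real.log (q (r n) (θ-φ))| + 1/2 * |Real.log (q (r n) (θ+φ))| := by
      simp only [hFn]
      rw [Real.norm_eq_abs, abs_mul]
      have hsin : |Real.sin θ^2| ≤ 1 := by
        rw [abs_of_nonneg (sq_nonneg _)]; exact Real.sin_sq_le_one θ
      have habs : |1/2 * Real.log (q (r n) (θ-φ)) + 1/2 * Real.log (q (r n) (θ+φ))|
          ≤ 1/2 * |Real.log (q (r n) (θ-φ))| + 1/2 * |Real.log (q (r n) (θ+φ))| := by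
        have e1 := abs_add_le (1/2 * Real.log (q (r n) (θ-φ))) (1/2 * Real.log (q (r n) (θ+φ)))
        have e2 : |1/2 * Real.log (q (r n) (θ-φ))| = 1/2 * |Real.log (q (r n) (θ-φ))| := by
          rw [abs_mul, abs_of_nonneg (by norm_num : (0:ℝ) ≤ 1/2)]
        have e3 : |1/2 * Real.log (q (r n) (θ+φ))| = 1/2 * |Real.log (q (r n) (θ+φ))| := by
          rw [abs_mul, abs_of_nonneg (by norm_num : (0:ℝ) ≤ 1/2)]
        linarith
      nlinarith [abs_nonneg (1/2 * Real.log (q (r n) (θ-φ)) + 1/2 * Real.log (q (r n) (θ+φ))),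
        abs_nonneg (Real.sin θ^2)]
    simp only [hG]
    linarith
  have hlim : ∀ᵐ θ ∂(volume.restrict (Ioo (0:ℝ) π)), Tendsto (fun n => Fn n θ) atTop
      (𝓝 (Real.log |l - 2*Real.cos θ| * Real.sin θ^2)) := by
    filter_upwards [hEae] with θ hθ
    obtain ⟨hs1, hs2⟩ := hθ
    have hq1pos : 0 < q 1 (θ-φ) :=
      lt_of_lt_of_le (by positivity) (q_lower (θ-φ) (by norm_num) le_rfl)
    have hq2pos : 0 < q 1 (θ+φ) :=
      lt_of_lt_of_le (by positivity) (q_lower (θ+φ) (by norm_num) le_rfl)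
    have hqc : ∀ x : ℝ, Continuous (fun s : ℝ => q s x) := by
      intro x; unfold q; fun_prop
    have hlim1 : Tendsto (fun n => Real.log (q (r n) (θ-φ))) atTop (𝓝 (Real.log (q 1 (θ-φ)))) :=
      ((Real.continuousAt_log hq1pos.ne').tendsto).comp (((hqc (θ-φ)).tendsto 1).comp hrto)
    have hlim2 : Tendsto (fun n => Real.log (q (r n) (θ+φ))) atTop (𝓝 (Real.log (q 1 (θ+φ)))) :=
      ((Real.continuousAt_log hq2pos.ne').tendsto).comp (((hqc (θ+φ)).tendsto 1).comp hrto)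
    have htarget : (1/2 * Real.log (q 1 (θ-φ)) + 1/2 * Real.log (q 1 (θ+φ))) * Real.sin θ^2
        = Real.log |l - 2*Real.cos θ| * Real.sin θ^2 := by
      have hprod : q 1 (θ-φ) * q 1 (θ+φ) = (l - 2*Real.cos θ)^2 := by
        have hl2 : l = 2 * Real.cos φ := by rw [hcos]; ring
        rw [hl2]
        unfold q
        rw [Real.cos_sub, Real.cos_add]
        linear_combination (-4*Real.sin φ^2) * Real.sin_sq_add_cos_sq θ
          + (4*(Real.cos θ^2 - 1)) * Real.sin_sq_add_cos_sq φ
      have hsum : Real.log (q 1 (θ-φ)) + Real.log (q 1 (θ+φ))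
          = 2 * Real.log |l - 2*Real.cos θ| := by
        rw [← Real.log_mul hq1pos.ne' hq2pos.ne', hprod, Real.log_pow, Real.log_abs]
        push_cast
        ring
      have : 1/2 * Real.log (q 1 (θ-φ)) + 1/2 * Real.log (q 1 (θ+φ))
          = Real.log |l - 2*Real.cos θ| := by linarith
      rw [this]
    rw [← htarget]
    exact (((hlim1.const_mul (1/2)).add (hlim2.const_mul (1/2))).mul_const (Real.sin θ^2))
  have hdct := MeasureTheory.tendsto_integral_of_dominated_convergence G hmeas hGint hbound hlim
  have hvals : ∀ n, ∫ θ in Ioo (0:ℝ) π, Fn n θ = π/4 * (r n)^2 * Real.cos (2*φ) :=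
    fun n => claim1 φ (hr0 n) (hrlt n)
  rw [show (fun n => ∫ θ in Ioo (0:ℝ) π, Fn n θ)
      = fun n => π/4 * (r n)^2 * Real.cos (2*φ) from funext hvals] at hdct
  have hto2 : Tendsto (fun n => π/4 * (r n)^2 * Real.cos (2*φ)) atTop
      (𝓝 (π/4 * 1^2 * Real.cos (2*φ))) :=
    (((hrto.pow 2).const_mul (π/4)).mul_const (Real.cos (2*φ)))
  have := tendsto_nhds_unique hdct hto2
  rw [this]
  have hcos2 : Real.cos (2*φ) = l^2/2 - 1 := by
    rw [Real.cos_two_mul, hcos]; ring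
  rw [hcos2]; ring

/-- The logarithmic potential of the Wigner semicircle law inside its support:
for `λ ∈ [−2,2]`, `∫_{−2}^{2} log|λ−s| · (1/(2π))√(4−s²) ds = λ²/4 − 1/2`. -/
theorem semicircle_log_potential (l : ℝ) (hl : l ∈ Set.Icc (-2 : ℝ) 2) :
    ∫ s in (-2 : ℝ)..2, Real.log |l - s| * (1 / (2 * π) * Real.sqrt (4 - s ^ 2))
      = l ^ 2 / 4 - 1 / 2 := by
  have hπ := Real.pi_pos
  rw [intervalIntegral.integral_of_le (by norm_num : (-2:ℝ) ≤ 2),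
    MeasureTheory.integral_Ioc_eq_integral_Ioo]
  have himg : (fun θ : ℝ => 2 * Real.cos θ) '' (Ioo 0 π) = Ioo (-2:ℝ) 2 := by
    ext y
    constructor
    · rintro ⟨θ, hθ, rfl⟩
      have h1 : Real.cos θ < Real.cos 0 :=
        Real.strictAntiOn_cos ⟨le_rfl, hπ.le⟩ ⟨hθ.1.le, hθ.2.le⟩ hθ.1
      have h2 : Real.cos π < Real.cos θ :=
        Real.strictAntiOn_cos ⟨hθ.1.le, hθ.2.le⟩ ⟨hπ.le, le_rfl⟩ hθ.2
      rw [Real.cos_zero] at h1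
      rw [Real.cos_pi] at h2
      exact ⟨by show -2 < 2 * Real.cos θ; linarith, by show 2 * Real.cos θ < 2; linarith⟩
    · intro hy
      rw [Set.mem_Ioo] at hy
      have hcosa : Real.cos (Real.arccos (y/2)) = y/2 :=
        Real.cos_arccos (by linarith) (by linarith)
      refine ⟨Real.arccos (y/2), ⟨?_, ?_⟩, ?_⟩
      · exact Real.arccos_pos.mpr (by linarith)
      · rcases lt_or_eq_of_le (Real.arccos_le_pi (y/2)) with h | h
        · exact h
        · rw [h, Real.cos_pi] at hcosa; linarith
      · show 2 * Real.cos (Real.arccos (y/2)) = y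
        rw [hcosa]; ring
  have hinj : InjOn (fun θ : ℝ => 2 * Real.cos θ) (Ioo 0 π) := by
    intro a ha b hb h
    exact Real.injOn_cos ⟨ha.1.le, ha.2.le⟩ ⟨hb.1.le, hb.2.le⟩ (by dsimp at h; linarith)
  have hder : ∀ θ ∈ Ioo (0:ℝ) π, HasDerivWithinAt (fun θ : ℝ => 2 * Real.cos θ)
      ((fun θ : ℝ => 2 * -Real.sin θ) θ) (Ioo 0 π) θ :=
    fun θ _ => ((Real.hasDerivAt_cos θ).const_mul 2).hasDerivWithinAt
  rw [← himg, MeasureTheory.integral_image_eq_integral_abs_deriv_smul measurableSet_Ioo hder hinj]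
  have hcong : ∀ θ ∈ Ioo (0:ℝ) π,
      |2 * -Real.sin θ| • (Real.log |l - 2 * Real.cos θ|
        * (1 / (2 * π) * Real.sqrt (4 - (2 * Real.cos θ) ^ 2)))
      = (2/π) * (Real.log |l - 2*Real.cos θ| * Real.sin θ^2) := by
    intro θ hθ
    have hs : 0 < Real.sin θ := Real.sin_pos_of_pos_of_lt_pi hθ.1 hθ.2
    have habs : |2 * -Real.sin θ| = 2 * Real.sin θ := by
      rw [show 2 * -Real.sin θ = -(2 * Real.sin θ) by ring, abs_neg,
        abs_of_nonneg (by linarith)]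
    have hsqrt : Real.sqrt (4 - (2 * Real.cos θ) ^ 2) = 2 * Real.sin θ := by
      rw [show (4:ℝ) - (2 * Real.cos θ)^2 = (2 * Real.sin θ)^2 from by
        linear_combination (-4 : ℝ) * Real.sin_sq_add_cos_sq θ]
      exact Real.sqrt_sq (by linarith)
    rw [habs, hsqrt, smul_eq_mul]
    field_simp
  rw [MeasureTheory.setIntegral_congr_fun measurableSet_Ioo hcong,
    MeasureTheory.integral_const_mul, X_eq l hl]
  field_simp
  ring
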